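/- Let (A^ℤ, F) be a cellular automaton and Σ a subshift. Suppose there exist k ≤ l in ℤ and a curve h : ℕ → ℤ such that for all x, x' ∈ Σ with x_⟦k,l⟧ = x'_⟦k,l⟧ and all t ∈ ℕ one has F^t(x)_{h(t)} = F^t(x')_{h(t)}. Then there exist times t₁ < t₂ such that σ^{h(t₂)−h(t₁)} ∘ F^{t₂} = F^{t₁} on Σ; consequently there is a rational α = (h(t₂)−h(t₁))/(t₂−t₁) such that h_α(n) = ⌊αn⌋ is a direction of uniform equicontinuity for F on Σ. -/

import Mathlib

open Classical

section Prelude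

variable {A : Type*}

/-- The shift map on configurations. -/
def shift (x : ℤ → A) : ℤ → A := fun i => x (i + 1)

/-- The cylinder of the word `u` placed at position `p`. -/
def cylAt (u : List A) (p : ℤ) : Set (ℤ → A) :=
  {x | ∀ i : Fin u.length, x (p + ((i : ℕ) : ℤ)) = u.get i}

/-- The region of consequences of a set of configurations. -/
def consSet (F : (ℤ → A) → (ℤ → A)) (X : Set (ℤ → A)) : Set (ℤ × ℕ) :=
  {q | ∀ x ∈ X, ∀ y ∈ X, F^[q.2] x q.1 = F^[q.2] y q.1}

/-- `F` is a cellular automaton with neighborhood `⟦r,s⟧`. -/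
def IsCA (F : (ℤ → A) → (ℤ → A)) (r s : ℤ) : Prop :=
  (∀ x, F (shift x) = shift (F x)) ∧
  (∀ x y : ℤ → A, (∀ i : ℤ, r ≤ i → i ≤ s → x i = y i) → F x 0 = F y 0)

/-- A subshift: a closed shift-invariant set. -/
def IsSubshift [TopologicalSpace A] (S : Set (ℤ → A)) : Prop :=
  IsClosed S ∧ shift '' S = S

/-- Two configurations agree on the centered window of radius `m`
(Cantor distance `< 2^{-m}`). -/
def close (m : ℕ) (x y : ℤ → A) : Prop := ∀ i : ℤ, |i| ≤ (m : ℤ) → x i = y i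

/-- `y` is in the tube of radius `2^{-k}` along `h` around `x`:
for every time `n` the configurations `σ^{h n} ∘ F^n (x)` and `σ^{h n} ∘ F^n (y)`
agree on the window of radius `k`. -/
def tube (F : (ℤ → A) → (ℤ → A)) (h : ℕ → ℤ) (k : ℕ) (x y : ℤ → A) : Prop :=
  ∀ n : ℕ, ∀ i : ℤ, |i| ≤ (k : ℤ) → F^[n] x (i + h n) = F^[n] y (i + h n)

/-- `x` is an equicontinuous point along `h` relative to `S`. -/
def eqPt (F : (ℤ → A) → (ℤ → A)) (S : Set (ℤ → A)) (h : ℕ → ℤ) (x : ℤ → A) : Prop :=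
  ∀ k : ℕ, ∃ m : ℕ, ∀ y ∈ S, close m x y → tube F h k x y

/-- `F` is sensitive along `h` relative to `S`. -/
def sensitive (F : (ℤ → A) → (ℤ → A)) (S : Set (ℤ → A)) (h : ℕ → ℤ) : Prop :=
  ∃ k : ℕ, ∀ m : ℕ, ∀ x ∈ S, ∃ y ∈ S, close m x y ∧ ¬ tube F h k x y

/-- `F` is right-expansive along `h` relative to `S`. -/
def rightExpansive (F : (ℤ → A) → (ℤ → A)) (S : Set (ℤ → A)) (h : ℕ → ℤ) : Prop :=
  ∃ k : ℕ, ∀ x ∈ S, ∀ y ∈ S, (∃ i : ℤ, 0 ≤ i ∧ x i ≠ y i) →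
    ∀ z ∈ S, ¬ (tube F h k x z ∧ tube F h k y z)

/-- `F` is left-expansive along `h` relative to `S`. -/
def leftExpansive (F : (ℤ → A) → (ℤ → A)) (S : Set (ℤ → A)) (h : ℕ → ℤ) : Prop :=
  ∃ k : ℕ, ∀ x ∈ S, ∀ y ∈ S, (∃ i : ℤ, i ≤ 0 ∧ x i ≠ y i) →
    ∀ z ∈ S, ¬ (tube F h k x z ∧ tube F h k y z)

/-- Curves with bounded variation. -/
def BV (h : ℕ → ℤ) : Prop := ∃ M : ℤ, 0 < M ∧ ∀ n : ℕ, |h (n + 1) - h n| ≤ M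

/-- The preorder `h ≾ k` on curves. -/
def precsim (h k : ℕ → ℤ) : Prop := ∃ M : ℤ, 0 < M ∧ ∀ n : ℕ, h n ≤ k n + M

/-- The equivalence `h ∼ k` on curves. -/
def simEq (h k : ℕ → ℤ) : Prop := ∃ M : ℤ, 0 < M ∧ ∀ n : ℕ, k n - M ≤ h n ∧ h n ≤ k n + M

/-- The word `u` belongs to the language of `S`. -/
def inLang (S : Set (ℤ → A)) (u : List A) : Prop := ∃ x ∈ S, x ∈ cylAt u 0

/-- Transitivity of a subshift, expressed on its language. -/
def transitiveSubshift (S : Set (ℤ → A)) : Prop :=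
  ∀ u v : List A, inLang S u → inLang S v → ∃ w : List A, inLang S (u ++ w ++ v)

/-- `u` is a blocking word along `h` for the CA `F` of neighborhood `⟦r,s⟧`,
relative to the subshift `S`. -/
def blockingWord (F : (ℤ → A) → (ℤ → A)) (S : Set (ℤ → A)) (h : ℕ → ℤ) (r s : ℤ)
    (u : List A) : Prop :=
  inLang S u ∧
  ∃ e : ℕ, 0 < e ∧
    (∀ n : ℕ, |h (n + 1) - h n| + s < (e : ℤ) ∧ |h (n + 1) - h n| - r < (e : ℤ)) ∧
    (e : ℤ) ≤ u.length ∧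
    ∃ p : ℤ, {q : ℤ × ℕ | h q.2 ≤ q.1 ∧ q.1 < h q.2 + (e : ℤ)} ⊆ consSet F (S ∩ cylAt u p)

end Prelude

section Stmt10Aux

variable {A : Type*}

/-- Shift by an arbitrary integer. -/
def shiftZ (m : ℤ) (x : ℤ → A) : ℤ → A := fun i => x (i + m)

lemma shift_injective : Function.Injective (shift (A := A)) := by
  intro x y hxy
  funext i
  have := congrFun hxy (i - 1)
  simpa [shift, sub_add_cancel] using this

lemma shiftZ_add_one (m : ℤ) (x : ℤ → A) : shiftZ (m + 1) x = shift (shiftZ m x) := by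
  funext i
  show x (i + (m + 1)) = x (i + 1 + m)
  congr 1
  ring

lemma shiftZ_zero (x : ℤ → A) : shiftZ 0 x = x := by
  funext i; show x (i + 0) = x i; rw [add_zero]

lemma F_shiftZ {F : (ℤ → A) → (ℤ → A)} (hcomm : ∀ x, F (shift x) = shift (F x))
    (m : ℤ) : ∀ x, F (shiftZ m x) = shiftZ m (F x) := by
  induction m using Int.induction_on with
  | zero => intro x; rw [shiftZ_zero, shiftZ_zero]
  | succ n ih =>
      intro x
      rw [shiftZ_add_one, hcomm, ih, ← shiftZ_add_one]
  | pred n ih =>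
      intro x
      apply shift_injective
      have e : shiftZ (-(n : ℤ)) = (shift ∘ shiftZ (-(n : ℤ) - 1) : (ℤ → A) → (ℤ → A)) := by
        funext z
        have := shiftZ_add_one (-(n : ℤ) - 1) z
        simpa [sub_add_cancel] using this
      calc shift (F (shiftZ (-(n : ℤ) - 1) x))
          = F (shift (shiftZ (-(n : ℤ) - 1) x)) := (hcomm _).symm
        _ = F (shiftZ (-(n : ℤ)) x) := by rw [e]; rfl
        _ = shiftZ (-(n : ℤ)) (F x) := ih x
        _ = shift (shiftZ (-(n : ℤ) - 1) (F x)) := by rw [e]; rfl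

lemma iter_shiftZ {F : (ℤ → A) → (ℤ → A)} (hcomm : ∀ x, F (shift x) = shift (F x))
    (n : ℕ) (m : ℤ) (x : ℤ → A) : F^[n] (shiftZ m x) = shiftZ m (F^[n] x) := by
  induction n generalizing x with
  | zero => rfl
  | succ n ih =>
      rw [Function.iterate_succ_apply, Function.iterate_succ_apply,
        F_shiftZ hcomm, ih]

lemma mem_shiftZ {S : Set (ℤ → A)} (hSinv : shift '' S = S) (m : ℤ) :
    ∀ x ∈ S, shiftZ m x ∈ S := by
  have fwd : ∀ x ∈ S, shift x ∈ S := by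
    intro x hx; rw [← hSinv]; exact Set.mem_image_of_mem _ hx
  have bwd : ∀ x : ℤ → A, shift x ∈ S → x ∈ S := by
    intro x hx
    rw [← hSinv] at hx
    obtain ⟨z, hz, hz2⟩ := hx
    rwa [← shift_injective hz2]
  induction m using Int.induction_on with
  | zero => intro x hx; rwa [shiftZ_zero]
  | succ n ih =>
      intro x hx
      rw [shiftZ_add_one]
      exact fwd _ (ih x hx)
  | pred n ih =>
      intro x hx
      apply bwd
      have e : shift (shiftZ (-(n : ℤ) - 1) x) = shiftZ (-(n : ℤ)) x := by
        have := shiftZ_add_one (-(n : ℤ) - 1) x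
        simp only [sub_add_cancel] at this
        exact this.symm
      rw [e]
      exact ih x hx

lemma localCA {F : (ℤ → A) → (ℤ → A)} {r s : ℤ} (hF : IsCA F r s) :
    ∀ t : ℕ, ∀ x y : ℤ → A, ∀ j : ℤ,
      (∀ i : ℤ, j + (t : ℤ) * min r 0 ≤ i → i ≤ j + (t : ℤ) * max s 0 → x i = y i) →
      F^[t] x j = F^[t] y j := by
  intro t
  induction t with
  | zero =>
      intro x y j hxy
      exact hxy j (by simp) (by simp)
  | succ t ih =>
      intro x y j hxy
      rw [Function.iterate_succ_apply, Function.iterate_succ_apply]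
      apply ih (F x) (F y) j
      intro i hi1 hi2
      have hx' : F x i = F (shiftZ i x) 0 := by
        rw [F_shiftZ hF.1]
        show F x i = F x (0 + i)
        rw [zero_add]
      have hy' : F y i = F (shiftZ i y) 0 := by
        rw [F_shiftZ hF.1]
        show F y i = F y (0 + i)
        rw [zero_add]
      rw [hx', hy']
      apply hF.2
      intro p hp1 hp2
      show x (p + i) = y (p + i)
      have hminr : min r 0 ≤ p := le_trans (min_le_left r 0) hp1
      have hmaxs : p ≤ max s 0 := le_trans hp2 (le_max_left s 0)
      apply hxy
      · have e : (((t : ℕ) + 1 : ℕ) : ℤ) * min r 0 = (t : ℤ) * min r 0 + min r 0 := by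
          push_cast; ring
        rw [e]  -- just to expand; might not match, use linarith instead
        linarith
      · have e : (((t : ℕ) + 1 : ℕ) : ℤ) * max s 0 = (t : ℤ) * max s 0 + max s 0 := by
          push_cast; ring
        rw [e]
        linarith

end Stmt10Aux
/-- if the trace `F^t(x)_{h(t)}` only depends on `x_{⟦k,l⟧}`, then
two iterates coincide up to a shift on `Σ`, giving a rational direction
`α = (h(t₂)-h(t₁))/(t₂-t₁)` of uniform equicontinuity. -/
theorem stmt10 {A : Type*} [Fintype A] [TopologicalSpace A] [DiscreteTopology A]
    (F : (ℤ → A) → (ℤ → A)) (r s : ℤ) (hF : IsCA F r s)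
    (S : Set (ℤ → A)) (hS : IsSubshift S)
    (k l : ℤ) (hkl : k ≤ l) (h : ℕ → ℤ)
    (hyp : ∀ x ∈ S, ∀ x' ∈ S, (∀ i : ℤ, k ≤ i → i ≤ l → x i = x' i) →
      ∀ t : ℕ, F^[t] x (h t) = F^[t] x' (h t)) :
    ∃ t₁ t₂ : ℕ, t₁ < t₂ ∧
      (∀ x ∈ S, ∀ i : ℤ, F^[t₂] x (i + (h t₂ - h t₁)) = F^[t₁] x i) ∧
      ∃ α : ℚ, α = ((h t₂ - h t₁ : ℤ) : ℚ) / (((t₂ - t₁ : ℕ) : ℚ)) ∧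
        ∀ K : ℕ, ∃ m : ℕ, ∀ x ∈ S, ∀ y ∈ S, close m x y →
          tube F (fun n => ⌊α * (n : ℚ)⌋) K x y := by
  classical
  have hcomm := hF.1
  have hSinv : ∀ m : ℤ, ∀ x ∈ S, shiftZ m x ∈ S := fun m => mem_shiftZ hS.2 m
  have hkk : k ∈ Set.Icc k l := ⟨le_refl k, hkl⟩
  -- pigeonhole on the finitely many trace maps
  set f : ℕ → ((Set.Icc k l → A) → A) := fun t u =>
    if hx : ∃ z, z ∈ S ∧ ∀ i : Set.Icc k l, z i = u i then F^[t] hx.choose (h t)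
    else u ⟨k, hkk⟩ with hfdef
  have hfS : ∀ t : ℕ, ∀ x ∈ S, f t (fun i => x i) = F^[t] x (h t) := by
    intro t x hxS
    have hx : ∃ z, z ∈ S ∧ ∀ i : Set.Icc k l, z i = (fun i : Set.Icc k l => x (i : ℤ)) i :=
      ⟨x, hxS, fun i => rfl⟩
    rw [hfdef]
    simp only [dif_pos hx]
    exact hyp _ hx.choose_spec.1 x hxS
      (fun i hki hil => hx.choose_spec.2 ⟨i, hki, hil⟩) t
  obtain ⟨a, b, hab, hfab⟩ := Finite.exists_ne_map_eq_of_infinite f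
  obtain ⟨t₁, t₂, h12, hfe⟩ : ∃ t₁ t₂ : ℕ, t₁ < t₂ ∧ f t₁ = f t₂ := by
    rcases lt_or_gt_of_ne hab with h' | h'
    · exact ⟨a, b, h', hfab⟩
    · exact ⟨b, a, h', hfab.symm⟩
  have trace : ∀ x ∈ S, F^[t₁] x (h t₁) = F^[t₂] x (h t₂) := by
    intro x hx
    rw [← hfS t₁ x hx, ← hfS t₂ x hx, hfe]
  set d : ℤ := h t₂ - h t₁ with hd
  have key : ∀ x ∈ S, ∀ i : ℤ, F^[t₂] x (i + d) = F^[t₁] x i := by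
    intro x hx i
    have hy : shiftZ (i - h t₁) x ∈ S := hSinv _ x hx
    have e1 : F^[t₁] (shiftZ (i - h t₁) x) (h t₁) = F^[t₂] (shiftZ (i - h t₁) x) (h t₂) :=
      trace _ hy
    rw [iter_shiftZ hcomm, iter_shiftZ hcomm] at e1
    simp only [shiftZ] at e1
    have a1 : h t₁ + (i - h t₁) = i := by ring
    have a2 : h t₂ + (i - h t₁) = i + d := by rw [hd]; ring
    rw [a1, a2] at e1
    exact e1.symm
  refine ⟨t₁, t₂, h12, fun x hx i => key x hx i, ?_⟩
  set p : ℕ := t₂ - t₁ with hpdef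
  have hp : 0 < p := Nat.sub_pos_of_lt h12
  have hpt : t₁ + p = t₂ := by rw [hpdef]; omega
  have hp0 : ((p : ℕ) : ℚ) ≠ 0 := Nat.cast_ne_zero.mpr hp.ne'
  refine ⟨(d : ℚ) / (p : ℚ), rfl, ?_⟩
  set α : ℚ := (d : ℚ) / (p : ℚ) with hαdef
  have hαp : α * (p : ℚ) = (d : ℚ) := by
    rw [hαdef, div_mul_cancel₀ _ hp0]
  -- the basic recursion
  have hrec : ∀ x ∈ S, ∀ n : ℕ, t₁ ≤ n → ∀ j : ℤ, F^[n + p] x (j + d) = F^[n] x j := by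
    intro x hx n hn j
    have hFt : F^[t₁] x = shiftZ d (F^[t₂] x) := by
      funext i
      show F^[t₁] x i = F^[t₂] x (i + d)
      exact (key x hx i).symm
    have hexp1 : n + p = (n - t₁) + t₂ := by rw [hpdef]; omega
    have hexp2 : (n - t₁) + t₁ = n := by omega
    calc F^[n + p] x (j + d) = F^[(n - t₁) + t₂] x (j + d) := by rw [hexp1]
      _ = F^[n - t₁] (F^[t₂] x) (j + d) := by rw [Function.iterate_add_apply]
      _ = shiftZ d (F^[n - t₁] (F^[t₂] x)) j := rfl
      _ = F^[n - t₁] (shiftZ d (F^[t₂] x)) j := by rw [iter_shiftZ hcomm]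
      _ = F^[n - t₁] (F^[t₁] x) j := by rw [hFt]
      _ = F^[(n - t₁) + t₁] x j := by rw [Function.iterate_add_apply]
      _ = F^[n] x j := by rw [hexp2]
  -- iterated recursion
  have hrecq : ∀ x ∈ S, ∀ q : ℕ, ∀ n : ℕ, t₁ ≤ n → ∀ j : ℤ,
      F^[n + q * p] x (j + (q : ℤ) * d) = F^[n] x j := by
    intro x hx q
    induction q with
    | zero => intro n hn j; simp
    | succ q ih =>
        intro n hn j
        have e1 : n + (q + 1) * p = (n + q * p) + p := by ring
        have e2 : j + ((q : ℕ) + 1 : ℤ) * d = (j + (q : ℤ) * d) + d := by ring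
        have e3 : (((q : ℕ) + 1 : ℕ) : ℤ) = ((q : ℕ) : ℤ) + 1 := by push_cast; ring
        rw [e3, e1, e2, hrec x hx (n + q * p) (by omega) (j + (q : ℤ) * d)]
        exact ih n hn j
  -- decomposition of times
  have hdecomp : ∀ n : ℕ, ∃ t' q : ℕ, t' < t₂ ∧ n = t' + q * p ∧ (q = 0 ∨ t₁ ≤ t') := by
    intro n
    by_cases hn : n < t₂
    · exact ⟨n, 0, hn, by ring_nf, Or.inl rfl⟩
    · refine ⟨t₁ + (n - t₁) % p, (n - t₁) / p, ?_, ?_, Or.inr (by omega)⟩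
      · have := Nat.mod_lt (n - t₁) hp
        omega
      · rw [add_assoc, Nat.mod_add_div', Nat.add_sub_cancel' (by omega : t₁ ≤ n)]
  -- floor arithmetic
  have hfloor : ∀ t' q : ℕ, ⌊α * ((t' + q * p : ℕ) : ℚ)⌋ = ⌊α * (t' : ℚ)⌋ + (q : ℤ) * d := by
    intro t' q
    have e : α * ((t' + q * p : ℕ) : ℚ) = α * (t' : ℚ) + (((q : ℤ) * d : ℤ) : ℚ) := by
      push_cast
      rw [mul_add]
      congr 1
      rw [show α * ((q : ℚ) * (p : ℚ)) = (q : ℚ) * (α * (p : ℚ)) by ring, hαp]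
    rw [e, Int.floor_add_intCast]
  set B : ℕ := (Finset.range t₂).sup (fun t' => (⌊α * (t' : ℚ)⌋).natAbs) with hB
  have hBb : ∀ t' : ℕ, t' < t₂ → (⌊α * (t' : ℚ)⌋).natAbs ≤ B := by
    intro t' ht'
    rw [hB]
    exact Finset.le_sup (f := fun t' : ℕ => (⌊α * (t' : ℚ)⌋).natAbs)
      (Finset.mem_range.mpr ht')
  intro K
  refine ⟨K + B + t₂ * (r.natAbs + s.natAbs), ?_⟩
  intro x hx y hy hclose
  intro n i hiK
  obtain ⟨t', q, ht', hn, hq⟩ := hdecomp n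
  have hfl : ⌊α * (n : ℚ)⌋ = ⌊α * (t' : ℚ)⌋ + (q : ℤ) * d := by
    rw [hn]; exact hfloor t' q
  have hcore : F^[t'] x (i + ⌊α * (t' : ℚ)⌋) = F^[t'] y (i + ⌊α * (t' : ℚ)⌋) := by
    apply localCA hF t'
    intro w hw1 hw2
    apply hclose
    have h1 : (⌊α * (t' : ℚ)⌋).natAbs ≤ B := hBb t' ht'
    have h2 : |(⌊α * (t' : ℚ)⌋)| ≤ (B : ℤ) := by
      rw [Int.abs_eq_natAbs]; exact_mod_cast h1
    have h3 : -|r| ≤ min r 0 := le_min (neg_abs_le r) (neg_nonpos_of_nonneg (abs_nonneg r))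
    have h4 : max s 0 ≤ |s| := max_le (le_abs_self s) (abs_nonneg s)
    have ht'2 : ((t' : ℕ) : ℤ) ≤ (t₂ : ℤ) := by exact_mod_cast ht'.le
    have ht'0 : (0 : ℤ) ≤ (t' : ℤ) := Int.ofNat_nonneg t'
    have hA : -((t₂ : ℤ) * |r|) ≤ (t' : ℤ) * min r 0 := by
      calc -((t₂ : ℤ) * |r|) = (t₂ : ℤ) * (-|r|) := by ring
        _ ≤ (t' : ℤ) * (-|r|) :=
            mul_le_mul_of_nonpos_right ht'2 (neg_nonpos_of_nonneg (abs_nonneg r))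
        _ ≤ (t' : ℤ) * min r 0 := mul_le_mul_of_nonneg_left h3 ht'0
    have hB2 : (t' : ℤ) * max s 0 ≤ (t₂ : ℤ) * |s| := by
      calc (t' : ℤ) * max s 0 ≤ (t' : ℤ) * |s| := mul_le_mul_of_nonneg_left h4 ht'0
        _ ≤ (t₂ : ℤ) * |s| := mul_le_mul_of_nonneg_right ht'2 (abs_nonneg s)
    have hi' := abs_le.mp hiK
    have hj' := abs_le.mp h2
    rw [abs_le]
    push_cast
    have hr0 : (0 : ℤ) ≤ (t₂ : ℤ) * |r| := by positivity
    have hs0 : (0 : ℤ) ≤ (t₂ : ℤ) * |s| := by positivity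
    constructor <;>
      linarith [hw1, hw2, hi'.1, hi'.2, hj'.1, hj'.2, hA, hB2, hr0, hs0]
  rcases hq with hq0 | hq1
  · subst hq0
    have hnn : n = t' := by simpa using hn
    subst hnn
    exact hcore
  · have e1 : i + ⌊α * (n : ℚ)⌋ = (i + ⌊α * (t' : ℚ)⌋) + (q : ℤ) * d := by
      rw [hfl]; ring
    rw [e1, hn, hrecq x hx q t' hq1 (i + ⌊α * (t' : ℚ)⌋),
      hrecq y hy q t' hq1 (i + ⌊α * (t' : ℚ)⌋)]
    exact hcore
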